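/- Let q be a real number with 0 < q < 1, let w₁ > 0 be real, let f be a positive integer and χ a nontrivial complex Dirichlet character modulo f. Then for every integer n ≥ 1, the generalized Barnes-type Changhee q-Bernoulli number satisfies β_{n,χ}(q|w₁) = [f]_q^{n−1} · Σ_{a=0}^{f−1} χ(a) · β_n( a·w₁/f : q^f | w₁ ), where on the right the Barnes-type Changhee q-Bernoulli polynomial is formed with q replaced by q^f. -/

import Mathlib

open Finset

/-- The q-analogue `[z]_q = (1 - q^z)/(1 - q)` for a real exponent `z`. -/
noncomputable def qn (q z : ℝ) : ℝ := (1 - q ^ z) / (1 - q)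

/-- The Barnes-type Changhee q-Bernoulli polynomial `β_n(w:q|w₁)`:
`β_0(w:q|w₁) = (q-1)/log q` and, for `n ≥ 1`,
`β_n(w:q|w₁) = ((q-1)/log q)·(1-q)^{-n} - n·w₁·Σ_{m≥0} q^{w₁m+w}·[w₁m+w]_q^{n-1}`. -/
noncomputable def qBw (q w w1 : ℝ) : ℕ → ℝ
  | 0 => (q - 1) / Real.log q
  | n + 1 => (q - 1) / Real.log q * ((1 - q) ^ (n + 1))⁻¹
      - ((n : ℝ) + 1) * w1 * ∑' m : ℕ, q ^ (w1 * (m : ℝ) + w) * qn q (w1 * (m : ℝ) + w) ^ n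

/-- Distribution relation for the generalized Barnes-type Changhee q-Bernoulli numbers
attached to a nontrivial Dirichlet character `χ` mod `f`:
`β_{n,χ}(q|w₁) = [f]_q^{n-1} · Σ_{a=0}^{f-1} χ(a) · β_n(a·w₁/f : q^f | w₁)`, where
`β_{n,χ}(q|w₁) = -n·w₁·Σ_{m≥1} χ(m)·q^{w₁m}·[w₁m]_q^{n-1}`. -/
theorem generalized_Changhee_qBernoulli_distribution (q : ℝ) (hq0 : 0 < q) (hq1 : q < 1)
    (w1 : ℝ) (hw1 : 0 < w1) (f : ℕ) (hf : 0 < f) (χ : DirichletCharacter ℂ f)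
    (hχ : ∑ a ∈ range f, χ ((a + 1 : ℕ) : ZMod f) = 0)
    (n : ℕ) (hn : 1 ≤ n) :
    -(n : ℂ) * (w1 : ℂ) * ∑' m : ℕ, χ ((m + 1 : ℕ) : ZMod f)
        * ((q ^ (w1 * ((m : ℝ) + 1)) : ℝ) : ℂ)
        * ((qn q (w1 * ((m : ℝ) + 1)) ^ (n - 1) : ℝ) : ℂ)
      = ((qn q (f : ℝ) ^ (n - 1) : ℝ) : ℂ)
        * ∑ a ∈ range f, χ (a : ZMod f)
          * ((qBw (q ^ f) ((a : ℝ) * w1 / (f : ℝ)) w1 n : ℝ) : ℂ) := by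
  -- dispense with f = 1
  by_cases hf1 : f = 1
  · subst hf1
    rw [Finset.sum_range_one] at hχ
    have : ((0 + 1 : ℕ) : ZMod 1) = 1 := by decide
    rw [this, map_one] at hχ
    exact absurd hχ one_ne_zero
  have hf2 : 1 < f := lt_of_le_of_ne hf (Ne.symm hf1)
  haveI : NeZero f := ⟨hf.ne'⟩
  haveI : Fact (1 < f) := ⟨hf2⟩
  haveI : Fintype (ZMod f) := ZMod.fintype f
  obtain ⟨k, rfl⟩ : ∃ k, n = k + 1 := ⟨n - 1, (Nat.succ_pred_eq_of_pos hn).symm⟩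
  have hk : k + 1 - 1 = k := by omega
  -- basic positivity facts
  have hq' : (0:ℝ) < 1 - q := by linarith
  have hfR : (0:ℝ) < (f:ℝ) := by exact_mod_cast hf
  set Q : ℝ := q ^ f with hQdef
  have hQ0 : 0 < Q := pow_pos hq0 f
  have hQ1 : Q < 1 := pow_lt_one₀ hq0.le hq1 hf.ne'
  set S : ℝ := qn q (f:ℝ) with hSdef
  set G : ℕ → ℝ := fun m => q ^ (w1 * (m:ℝ)) * qn q (w1 * (m:ℝ)) ^ k with hGdef
  set F : ℕ → ℂ := fun m => χ ((m : ℕ) : ZMod f) * ((G m : ℝ) : ℂ) with hFdef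
  -- bounds on qn
  have hqn : ∀ z : ℝ, 0 ≤ z → 0 ≤ qn q z ∧ qn q z ≤ (1-q)⁻¹ := by
    intro z hz
    have h1 : q ^ z ≤ 1 := Real.rpow_le_one hq0.le hq1.le hz
    have h2 : 0 ≤ q ^ z := (Real.rpow_pos_of_pos hq0 z).le
    constructor
    · exact div_nonneg (by linarith) hq'.le
    · rw [qn, div_le_iff₀ hq']
      calc 1 - q ^ z ≤ 1 := by linarith
        _ = (1-q)⁻¹ * (1 - q) := by field_simp
  -- summability of F
  have hr1 : q ^ w1 < 1 := Real.rpow_lt_one hq0.le hq1 hw1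
  have hr0 : 0 < q ^ w1 := Real.rpow_pos_of_pos hq0 w1
  have hGb : ∀ m : ℕ, ‖G m‖ ≤ (1-q)⁻¹ ^ k * (q ^ w1) ^ m := by
    intro m
    have hz : 0 ≤ w1 * (m:ℝ) := by positivity
    obtain ⟨h1, h2⟩ := hqn _ hz
    have hpow : q ^ (w1 * (m:ℝ)) = (q ^ w1) ^ m := by
      rw [Real.rpow_mul hq0.le, Real.rpow_natCast]
    have hGnn : 0 ≤ G m := by
      simp only [hGdef]
      positivity
    rw [Real.norm_eq_abs, abs_of_nonneg hGnn, hGdef]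
    simp only
    rw [hpow, mul_comm]
    exact mul_le_mul (pow_le_pow_left₀ h1 h2 k) le_rfl (by positivity) (by positivity)
  have hFs : Summable F := by
    apply Summable.of_norm_bounded (g := fun m => (1-q)⁻¹ ^ k * (q ^ w1) ^ m)
      (((summable_geometric_of_lt_one hr0.le hr1).mul_left _))
    intro m
    rw [hFdef]
    simp only
    rw [norm_mul, Complex.norm_real]
    calc ‖χ ((m:ℕ) : ZMod f)‖ * |G m| ≤ 1 * ((1-q)⁻¹ ^ k * (q ^ w1) ^ m) :=
      mul_le_mul (DirichletCharacter.norm_le_one χ _) (hGb m) (abs_nonneg _) zero_le_one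
      _ = _ := one_mul _
  -- F 0 = 0
  have hF0 : F 0 = 0 := by
    have : ¬ IsUnit ((0:ℕ) : ZMod f) := by
      rw [Nat.cast_zero]
      exact not_isUnit_zero
    rw [hFdef]
    simp only
    rw [χ.map_nonunit this, zero_mul]
  -- key per-term identity
  have hQpow : ∀ x : ℝ, Q ^ x = q ^ ((f:ℝ) * x) := by
    intro x
    rw [hQdef, ← Real.rpow_natCast q f, ← Real.rpow_mul hq0.le]
  have hqnmul : ∀ z : ℝ, S * qn Q z = qn q ((f:ℝ) * z) := by
    intro z
    have hQne : 1 - Q ≠ 0 := by linarith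
    have hqf : q ^ ((f:ℝ)) = Q := by rw [Real.rpow_natCast]
    rw [hSdef, qn, qn, qn, hqf, hQpow z]
    field_simp
  have key : ∀ (a m : ℕ),
      S ^ k * (Q ^ (w1 * (m:ℝ) + (a:ℝ) * w1 / (f:ℝ))
        * qn Q (w1 * (m:ℝ) + (a:ℝ) * w1 / (f:ℝ)) ^ k)
      = G (m * f + a) := by
    intro a m
    set z : ℝ := w1 * (m:ℝ) + (a:ℝ) * w1 / (f:ℝ) with hz
    have hfz : (f:ℝ) * z = w1 * ((m * f + a : ℕ) : ℝ) := by
      rw [hz]; push_cast; field_simp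
    calc S ^ k * (Q ^ z * qn Q z ^ k) = Q ^ z * (S * qn Q z) ^ k := by
          rw [mul_pow]; ring
      _ = q ^ ((f:ℝ) * z) * qn q ((f:ℝ) * z) ^ k := by rw [hQpow, hqnmul]
      _ = G (m * f + a) := by rw [hfz, hGdef]
  -- sum over residue classes
  have hsplit : ∑' m : ℕ, F m = ∑ a ∈ range f, ∑' m : ℕ, F (m * f + a) := by
    set e : Fin f × ℕ ≃ ℕ := (Equiv.prodComm (Fin f) ℕ).trans (Nat.divModEquiv f).symm
      with hedef
    have he : ∀ p : Fin f × ℕ, e p = p.2 * f + (p.1 : ℕ) := fun p => rfl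
    have hsum : Summable (fun p : Fin f × ℕ => F (p.2 * f + (p.1 : ℕ))) :=
      ((e.summable_iff (f := F)).mpr hFs).congr (fun p => by rw [Function.comp_apply, he])
    calc ∑' m : ℕ, F m = ∑' p : Fin f × ℕ, F (e p) := (e.tsum_eq F).symm
      _ = ∑' p : Fin f × ℕ, F (p.2 * f + (p.1 : ℕ)) := tsum_congr fun p => by rw [he]
      _ = ∑' (a : Fin f) (m : ℕ), F (m * f + (a : ℕ)) := Summable.tsum_prod hsum
      _ = ∑ a : Fin f, ∑' m : ℕ, F (m * f + (a : ℕ)) := tsum_fintype _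
      _ = ∑ a ∈ range f, ∑' m : ℕ, F (m * f + a) :=
          Fin.sum_univ_eq_sum_range (fun j => ∑' m : ℕ, F (m * f + j)) f
  -- named sums
  set T : ℕ → ℝ := fun a => ∑' m : ℕ, Q ^ (w1 * (m:ℝ) + (a:ℝ) * w1 / (f:ℝ))
      * qn Q (w1 * (m:ℝ) + (a:ℝ) * w1 / (f:ℝ)) ^ k with hTdef
  set U : ℕ → ℝ := fun a => ∑' m : ℕ, G (m * f + a) with hUdef
  -- per residue class
  have hA : ∀ a : ℕ, ∑' m : ℕ, F (m * f + a) = χ ((a:ℕ) : ZMod f) * ((U a : ℝ) : ℂ) := by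
    intro a
    rw [hUdef]
    simp only
    rw [Complex.ofReal_tsum, ← tsum_mul_left]
    refine tsum_congr fun m => ?_
    rw [hFdef]
    simp only
    congr 2
    push_cast [ZMod.natCast_self]
    ring
  have hB : ∀ a : ℕ, S ^ k * T a = U a := by
    intro a
    rw [hTdef, hUdef]
    simp only
    rw [← tsum_mul_left]
    exact tsum_congr fun m => key a m
  -- character sum is 0
  have hχ0 : ∑ a ∈ range f, χ ((a:ℕ) : ZMod f) = 0 := by
    have h1 : ∀ g : ZMod f → ℂ, ∑ a ∈ range f, g ((a:ℕ) : ZMod f) = ∑ x : ZMod f, g x := by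
      intro g
      refine Finset.sum_nbij' (fun a => ((a:ℕ) : ZMod f)) (fun x => x.val) ?_ ?_ ?_ ?_ ?_
      · intro a _; exact mem_univ _
      · intro x _; exact mem_range.mpr (ZMod.val_lt x)
      · intro a ha; exact ZMod.val_cast_of_lt (mem_range.mp ha)
      · intro x _; exact ZMod.natCast_rightInverse x
      · intro a _; rfl
    have h2 : ∑ a ∈ range f, χ (((a:ℕ) : ZMod f) + 1) = 0 := by
      rw [← hχ]
      refine Finset.sum_congr rfl fun a _ => ?_
      push_cast
      ring_nf
    rw [h1]
    rw [h1 (fun x => χ (x + 1))] at h2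
    rw [← h2]
    exact (Fintype.sum_equiv (Equiv.addRight (1 : ZMod f)) _ _ (fun x => rfl)).symm
  -- unfold qBw
  set C : ℝ := (Q - 1) / Real.log Q * ((1 - Q) ^ (k + 1))⁻¹ with hCdef
  have hqBw : ∀ a : ℕ, qBw Q ((a:ℝ) * w1 / (f:ℝ)) w1 (k + 1)
      = C - ((k:ℝ) + 1) * w1 * T a := by
    intro a
    rw [qBw, hCdef, hTdef]
  clear_value Q S G F T U C
  -- now compute
  rw [hk]
  calc -(((k:ℕ)+1 : ℕ) : ℂ) * (w1 : ℂ) * ∑' m : ℕ, χ ((m + 1 : ℕ) : ZMod f)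
        * ((q ^ (w1 * ((m : ℝ) + 1)) : ℝ) : ℂ)
        * ((qn q (w1 * ((m : ℝ) + 1)) ^ k : ℝ) : ℂ)
      = -(((k:ℕ)+1 : ℕ) : ℂ) * (w1 : ℂ) * ∑' m : ℕ, F (m + 1) := by
        congr 1
        refine tsum_congr fun m => ?_
        rw [hFdef, hGdef]
        simp only
        push_cast
        ring
    _ = -(((k:ℕ)+1 : ℕ) : ℂ) * (w1 : ℂ) * ∑' m : ℕ, F m := by
        rw [Summable.tsum_eq_zero_add hFs, hF0, zero_add]
    _ = ∑ a ∈ range f, -(((k:ℂ)+1)) * (w1 : ℂ) * (χ ((a:ℕ) : ZMod f) * ((U a : ℝ) : ℂ)) := by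
        rw [hsplit, Finset.mul_sum]
        refine Finset.sum_congr rfl fun a _ => ?_
        rw [hA a]
        push_cast
        ring
    _ = ∑ a ∈ range f, (((S ^ k : ℝ) : ℂ)
          * (χ ((a:ℕ) : ZMod f) * ((C - ((k:ℝ) + 1) * w1 * T a : ℝ) : ℂ))
          - χ ((a:ℕ) : ZMod f) * (((S ^ k : ℝ) : ℂ) * ((C : ℝ) : ℂ))) := by
        refine Finset.sum_congr rfl fun a _ => ?_
        rw [← hB a]
        push_cast
        ring
    _ = ∑ a ∈ range f, ((S ^ k : ℝ) : ℂ)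
          * (χ ((a:ℕ) : ZMod f) * ((C - ((k:ℝ) + 1) * w1 * T a : ℝ) : ℂ)) := by
        rw [Finset.sum_sub_distrib]
        have h0 : ∑ a ∈ range f, χ ((a:ℕ) : ZMod f) * (((S ^ k : ℝ) : ℂ) * ((C : ℝ) : ℂ)) = 0 := by
          rw [← Finset.sum_mul, hχ0, zero_mul]
        rw [h0, sub_zero]
    _ = ((S ^ k : ℝ) : ℂ) * ∑ a ∈ range f, χ ((a:ℕ) : ZMod f)
          * ((qBw Q ((a:ℝ) * w1 / (f:ℝ)) w1 (k+1) : ℝ) : ℂ) := by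
        rw [Finset.mul_sum]
        exact Finset.sum_congr rfl fun a _ => by rw [hqBw a]
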